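/- Fix a < 0. There exist constants C > 0 and η₀ > 0 such that for all η ≥ η₀ one has ‖L₋(η) − (0, 1)‖ ≤ C/η and ‖L₊(η) − (−a, 1)/√(1+a²)‖ ≤ C/η, where ‖·‖ is the Euclidean norm on ℝ². -/

import Mathlib

noncomputable def Mmat (a η : ℝ) : Matrix (Fin 2) (Fin 2) ℝ :=
  !![-η * a, 1 + η; 1, 0]

noncomputable def lamP (a η : ℝ) : ℝ :=
  (-(a * η) + Real.sqrt (a ^ 2 * η ^ 2 + 4 * (η + 1))) / 2

noncomputable def lamM (a η : ℝ) : ℝ :=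
  (-(a * η) - Real.sqrt (a ^ 2 * η ^ 2 + 4 * (η + 1))) / 2

noncomputable def Lp (a η : ℝ) : Fin 2 → ℝ :=
  (Real.sqrt ((1 + η) ^ 2 + lamP a η ^ 2))⁻¹ • ![lamP a η, 1 + η]

noncomputable def Lm (a η : ℝ) : Fin 2 → ℝ :=
  (Real.sqrt ((1 + η) ^ 2 + lamM a η ^ 2))⁻¹ • ![lamM a η, 1 + η]

noncomputable def eucNorm (v : Fin 2 → ℝ) : ℝ :=
  Real.sqrt (v 0 ^ 2 + v 1 ^ 2)

noncomputable def Pmat (a η : ℝ) : Matrix (Fin 2) (Fin 2) ℝ :=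
  Matrix.of ![Lp a η, Lm a η]

def Amat : Matrix (Fin 2) (Fin 2) ℝ := !![0, 1; 1, 0]

lemma one_le_sqrt_one_add_sq (t : ℝ) : 1 ≤ Real.sqrt (1 + t^2) := by
  have h : Real.sqrt 1 ≤ Real.sqrt (1 + t^2) := Real.sqrt_le_sqrt (by nlinarith [sq_nonneg t])
  simpa using h

lemma Lcomp (lam η : ℝ) (hη1 : 0 < 1+η) :
    (Real.sqrt ((1 + η) ^ 2 + lam ^ 2))⁻¹ * lam
      = (lam/(1+η)) / Real.sqrt (1 + (lam/(1+η))^2) ∧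
    (Real.sqrt ((1 + η) ^ 2 + lam ^ 2))⁻¹ * (1+η)
      = (Real.sqrt (1 + (lam/(1+η))^2))⁻¹ := by
  have harg : (1+η)^2 + lam^2 = (1+η)^2 * (1 + (lam/(1+η))^2) := by
    field_simp
  have hT : 0 < Real.sqrt (1 + (lam/(1+η))^2) :=
    lt_of_lt_of_le one_pos (one_le_sqrt_one_add_sq _)
  rw [harg, Real.sqrt_mul (by positivity), Real.sqrt_sq hη1.le]
  constructor
  · field_simp
  · field_simp

lemma lip_aux (t s : ℝ) (ht : 0 ≤ t) (hs : 0 ≤ s) :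
    1 + t*s ≤ Real.sqrt (1+t^2) * Real.sqrt (1+s^2) := by
  rw [← Real.sqrt_mul (by positivity)]
  refine (Real.le_sqrt (by positivity) (by positivity)).mpr ?_
  nlinarith [sq_nonneg (t-s), mul_nonneg ht hs]

lemma lip1 (t s : ℝ) (ht : 0 ≤ t) (hs : 0 ≤ s) :
    |t / Real.sqrt (1+t^2) - s / Real.sqrt (1+s^2)| ≤ |t - s| := by
  set A := Real.sqrt (1+t^2) with hA
  set B := Real.sqrt (1+s^2) with hB
  have hA1 : 1 ≤ A := one_le_sqrt_one_add_sq t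
  have hB1 : 1 ≤ B := one_le_sqrt_one_add_sq s
  have hA2 : A^2 = 1 + t^2 := Real.sq_sqrt (by positivity)
  have hB2 : B^2 = 1 + s^2 := Real.sq_sqrt (by positivity)
  have hAB : 1 + t*s ≤ A*B := lip_aux t s ht hs
  clear_value A B
  have hsq : (t/A - s/B)^2 ≤ (t-s)^2 := by
    rw [div_sub_div _ _ (by linarith) (by linarith), div_pow, div_le_iff₀ (by positivity)]
    have e1 : t^2*B^2 = t^2*(1+s^2) := by rw [hB2]
    have e2 : s^2*A^2 = s^2*(1+t^2) := by rw [hA2]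
    have h1 : t*s*(1+t*s) ≤ t*s*(A*B) := mul_le_mul_of_nonneg_left hAB (mul_nonneg ht hs)
    have hAB1 : 1 ≤ A*B := le_trans (by nlinarith [mul_nonneg ht hs]) hAB
    have h2 : (t-s)^2 * 1 ≤ (t-s)^2 * (A*B)^2 := mul_le_mul_of_nonneg_left (by nlinarith) (sq_nonneg _)
    nlinarith [e1, e2, h1, h2]
  have := Real.sqrt_le_sqrt hsq
  rwa [Real.sqrt_sq_eq_abs, Real.sqrt_sq_eq_abs] at this

lemma lip2 (t s : ℝ) (ht : 0 ≤ t) (hs : 0 ≤ s) :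
    |(Real.sqrt (1+t^2))⁻¹ - (Real.sqrt (1+s^2))⁻¹| ≤ |t - s| := by
  set A := Real.sqrt (1+t^2) with hA
  set B := Real.sqrt (1+s^2) with hB
  have hA1 : 1 ≤ A := one_le_sqrt_one_add_sq t
  have hB1 : 1 ≤ B := one_le_sqrt_one_add_sq s
  have hA2 : A^2 = 1 + t^2 := Real.sq_sqrt (by positivity)
  have hB2 : B^2 = 1 + s^2 := Real.sq_sqrt (by positivity)
  have hAB : 1 + t*s ≤ A*B := lip_aux t s ht hs
  clear_value A B
  have hsq : (A⁻¹ - B⁻¹)^2 ≤ (t-s)^2 := by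
    rw [inv_eq_one_div, inv_eq_one_div, div_sub_div _ _ (by linarith) (by linarith), div_pow,
      div_le_iff₀ (by positivity)]
    have hAB1 : 1 ≤ A*B := le_trans (by nlinarith [mul_nonneg ht hs]) hAB
    have h2 : (t-s)^2 * 1 ≤ (t-s)^2 * (A*B)^2 := mul_le_mul_of_nonneg_left (by nlinarith) (sq_nonneg _)
    nlinarith [hAB, h2, hA2, hB2]
  have := Real.sqrt_le_sqrt hsq
  rwa [Real.sqrt_sq_eq_abs, Real.sqrt_sq_eq_abs] at this

lemma sqrt_add_sq_le (x y : ℝ) : Real.sqrt (x ^ 2 + y ^ 2) ≤ |x| + |y| := by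
  have h : Real.sqrt (x ^2 + y ^2) ≤ Real.sqrt ((|x| + |y|)^2) :=
    Real.sqrt_le_sqrt (by nlinarith [sq_abs x, sq_abs y, mul_nonneg (abs_nonneg x) (abs_nonneg y)])
  rw [Real.sqrt_sq_eq_abs] at h
  exact h.trans_eq (abs_of_nonneg (by positivity))

lemma eucNorm_le_abs' (v : Fin 2 → ℝ) : eucNorm v ≤ |v 0| + |v 1| := by
  rw [eucNorm]; exact sqrt_add_sq_le _ _

set_option maxHeartbeats 1000000 in
theorem stmt7 (a : ℝ) (ha : a < 0) :
    ∃ C > (0 : ℝ), ∃ η₀ > (0 : ℝ), ∀ η : ℝ, η₀ ≤ η →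
      eucNorm (Lm a η - ![0, 1]) ≤ C / η ∧
      eucNorm (Lp a η - (Real.sqrt (1 + a ^ 2))⁻¹ • ![-a, 1]) ≤ C / η := by
  obtain ⟨b, hbdef⟩ : ∃ b : ℝ, b = -a := ⟨_, rfl⟩
  have hb : 0 < b := by rw [hbdef]; linarith
  have ha2 : a^2 = b^2 := by rw [hbdef]; ring
  refine ⟨4/b + 2*b, by positivity, 1, one_pos, fun η hη => ?_⟩
  have hη0 : (0:ℝ) < η := lt_of_lt_of_le one_pos hη
  have hη1 : (0:ℝ) < 1 + η := by linarith
  obtain ⟨s, hsdef⟩ : ∃ s : ℝ, s = Real.sqrt (a ^ 2 * η ^ 2 + 4 * (η + 1)) := ⟨_, rfl⟩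
  have hX : (0:ℝ) ≤ a ^ 2 * η ^ 2 + 4 * (η + 1) := by positivity
  have hs2 : s^2 = a ^ 2 * η ^ 2 + 4 * (η + 1) := by rw [hsdef]; exact Real.sq_sqrt hX
  have hs0 : 0 ≤ s := hsdef ▸ Real.sqrt_nonneg _
  have hq : 2*(b*η)*(2*(η+1)/(b*η)) = 4*(η+1) := by field_simp; ring
  have hkey : s ≤ b*η + 2*(η+1)/(b*η) := by
    have h1 : a ^ 2 * η ^ 2 + 4 * (η + 1) ≤ (b*η + 2*(η+1)/(b*η))^2 := by
      nlinarith [sq_nonneg (2*(η+1)/(b*η)), hq, ha2]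
    rw [hsdef]
    calc Real.sqrt (a ^ 2 * η ^ 2 + 4 * (η + 1))
        ≤ Real.sqrt ((b*η + 2*(η+1)/(b*η))^2) := Real.sqrt_le_sqrt h1
      _ = b*η + 2*(η+1)/(b*η) := Real.sqrt_sq (by positivity)
  have hsge : b*η ≤ s := by
    have h2 : Real.sqrt ((b*η)^2) ≤ Real.sqrt (a ^ 2 * η ^ 2 + 4 * (η + 1)) :=
      Real.sqrt_le_sqrt (by nlinarith)
    rw [Real.sqrt_sq (by positivity)] at h2
    rw [hsdef]; exact h2
  obtain ⟨m, hmdef⟩ : ∃ m : ℝ, m = (s - b*η)/2 := ⟨_, rfl⟩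
  have hm0 : 0 ≤ m := by rw [hmdef]; linarith
  have hq2 : 2*(η+1)/(b*η)*(b*η) = 2*(η+1) := by field_simp
  have hm' : m*(b*η) ≤ η+1 := by
    have h3 := mul_le_mul_of_nonneg_right hkey (by positivity : (0:ℝ) ≤ b*η)
    rw [hmdef]; nlinarith [hq2]
  have hlamM : lamM a η = -m := by
    rw [lamM, ← hsdef, hmdef, hbdef]; ring
  have hlamP : lamP a η = b*η + m := by
    rw [lamP, ← hsdef, hmdef, hbdef]; ring
  constructor
  · -- Lm bound
    obtain ⟨u, hudef⟩ : ∃ u : ℝ, u = m/(1+η) := ⟨_, rfl⟩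
    have hu0 : 0 ≤ u := hudef ▸ div_nonneg hm0 hη1.le
    have hu : u ≤ 1/(b*η) := by
      rw [hudef, div_le_div_iff₀ hη1 (by positivity)]
      linarith [hm']
    have hS1 : 1 ≤ Real.sqrt (1+u^2) := one_le_sqrt_one_add_sq u
    have hSpos : (0:ℝ) < Real.sqrt (1+u^2) := lt_of_lt_of_le one_pos hS1
    have hw : lamM a η/(1+η) = -u := by rw [hlamM, hudef]; ring
    have hLm0 : Lm a η 0 = -(u / Real.sqrt (1+u^2)) := by
      have := (Lcomp (lamM a η) η hη1).1
      rw [hw] at this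
      simp only [Lm, Pi.smul_apply, smul_eq_mul, Matrix.cons_val_zero]
      rw [this, neg_sq, neg_div]
    have hLm1 : Lm a η 1 = (Real.sqrt (1+u^2))⁻¹ := by
      have := (Lcomp (lamM a η) η hη1).2
      rw [hw] at this
      simp only [Lm, Pi.smul_apply, smul_eq_mul, Matrix.cons_val_one, Matrix.head_cons, Matrix.cons_val_zero]
      rw [this, neg_sq]
    have hd0 : |(Lm a η - ![0, 1] : Fin 2 → ℝ) 0| ≤ u := by
      simp only [Pi.sub_apply, hLm0, Matrix.cons_val_zero, sub_zero, abs_neg, abs_div]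
      rw [abs_of_nonneg hu0, abs_of_pos hSpos]
      exact div_le_self hu0 hS1
    have hd1 : |(Lm a η - ![0, 1] : Fin 2 → ℝ) 1| ≤ u := by
      have h5 := lip2 u 0 hu0 le_rfl
      simp only [Pi.sub_apply, hLm1, Matrix.cons_val_one, Matrix.head_cons]
      have e5 : (1:ℝ) + 0^2 = 1 := by norm_num
      rw [e5, Real.sqrt_one, inv_one, sub_zero, abs_of_nonneg hu0] at h5
      exact h5
    have hb1 : eucNorm (Lm a η - ![0, 1]) ≤ 2*u := by
      have h6 := eucNorm_le_abs' (Lm a η - ![0, 1])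
      linarith
    have h7a : 2*u ≤ 2/(b*η) := by
      rw [le_div_iff₀ (by positivity : (0:ℝ) < b*η)]
      have h8 := mul_le_mul_of_nonneg_right hu (by positivity : (0:ℝ) ≤ b*η)
      rw [one_div, inv_mul_cancel₀ (by positivity : (b*η) ≠ 0)] at h8
      linarith
    have h7b : 2/(b*η) ≤ (4/b + 2*b)/η := by
      rw [div_le_div_iff₀ (by positivity) hη0]
      have e7 : (4/b + 2*b)*(b*η) = 4*η + 2*b^2*η := by field_simp
      nlinarith [e7, mul_nonneg (sq_nonneg b) hη0.le]
    have h7 : 2*u ≤ (4/b + 2*b)/η := le_trans h7a h7b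
    linarith
  · -- Lp bound
    obtain ⟨t, htdef⟩ : ∃ t : ℝ, t = (b*η + m)/(1+η) := ⟨_, rfl⟩
    have ht0 : 0 ≤ t := htdef ▸ div_nonneg (by positivity) hη1.le
    have hmη : m*η ≤ (1+η)/b := by
      rw [le_div_iff₀ hb]; nlinarith [hm']
    have htb : |t - b| ≤ (2/b + b)/η := by
      have e : t - b = (m - b)/(1+η) := by rw [htdef]; field_simp; ring
      rw [e, abs_div, abs_of_pos hη1]
      have h1 : |m - b| ≤ m + b := by
        rw [abs_le]; constructor <;> linarith [hm0, hb.le]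
      have h2 : (m + b)/(1+η) ≤ (2/b + b)/η := by
        rw [div_le_div_iff₀ hη1 hη0]
        have hE : (2/b + b)*(1+η) = 2*((1+η)/b) + b*(1+η) := by field_simp
        have hr0 : 0 ≤ (1+η)/b := by positivity
        nlinarith [hmη, hE, hr0]
      calc |m - b|/(1+η) ≤ (m + b)/(1+η) := by gcongr
        _ ≤ (2/b + b)/η := h2
    have hw : lamP a η/(1+η) = t := by rw [hlamP, htdef]
    have hLp0 : Lp a η 0 = t / Real.sqrt (1+t^2) := by
      have := (Lcomp (lamP a η) η hη1).1
      rw [hw] at this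
      simp only [Lp, Pi.smul_apply, smul_eq_mul, Matrix.cons_val_zero]
      rw [this]
    have hLp1 : Lp a η 1 = (Real.sqrt (1+t^2))⁻¹ := by
      have := (Lcomp (lamP a η) η hη1).2
      rw [hw] at this
      simp only [Lp, Pi.smul_apply, smul_eq_mul, Matrix.cons_val_one, Matrix.head_cons, Matrix.cons_val_zero]
      rw [this]
    have hT0 : ((Real.sqrt (1 + a ^ 2))⁻¹ • ![-a, 1] : Fin 2 → ℝ) 0 = b / Real.sqrt (1+b^2) := by
      simp only [Pi.smul_apply, smul_eq_mul, Matrix.cons_val_zero, ha2]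
      rw [← hbdef, inv_mul_eq_div]
    have hT1 : ((Real.sqrt (1 + a ^ 2))⁻¹ • ![-a, 1] : Fin 2 → ℝ) 1 = (Real.sqrt (1+b^2))⁻¹ := by
      simp only [Pi.smul_apply, smul_eq_mul, Matrix.cons_val_one, Matrix.head_cons, ha2, mul_one, Matrix.cons_val_zero]
    have hd0 : |(Lp a η - (Real.sqrt (1 + a ^ 2))⁻¹ • ![-a, 1] : Fin 2 → ℝ) 0| ≤ (2/b + b)/η := by
      rw [Pi.sub_apply, hLp0, hT0]
      exact le_trans (lip1 t b ht0 hb.le) htb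
    have hd1 : |(Lp a η - (Real.sqrt (1 + a ^ 2))⁻¹ • ![-a, 1] : Fin 2 → ℝ) 1| ≤ (2/b + b)/η := by
      rw [Pi.sub_apply, hLp1, hT1]
      exact le_trans (lip2 t b ht0 hb.le) htb
    have hb1 := eucNorm_le_abs' (Lp a η - (Real.sqrt (1 + a ^ 2))⁻¹ • ![-a, 1])
    have e8 : (2:ℝ)*((2/b + b)/η) = (4/b + 2*b)/η := by field_simp; ring
    linarith
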